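/- (Cancellation in the operator geometric sum.) Let d ≥ 1, λ > 0, ε > 0, and let H be a Hermitian d × d complex matrix such that every nonzero eigenvalue μ of H satisfies |μ| ≥ λ, and such that ε·‖H‖ ≤ π. Let U = exp(i ε H) and let w ∈ ℂ^d be any vector orthogonal to the kernel of H. Then for every natural number Δ, ‖∑_{j=0}^{Δ−1} U^j w‖ ≤ (4/(ε λ))·‖w‖. -/

import Mathlib

open scoped InnerProductSpace

/-- The continuous linear map on Euclidean space associated to a matrix;
its operator norm is the operator norm induced by the Euclidean norm. -/
noncomputable def opCLM {d : ℕ} (A : Matrix (Fin d) (Fin d) ℂ) :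
    EuclideanSpace ℂ (Fin d) →L[ℂ] EuclideanSpace ℂ (Fin d) :=
  Matrix.toEuclideanCLM (𝕜 := ℂ) A

section aux
variable {E : Type*} [NormedAddCommGroup E] [NormedSpace ℂ E] [CompleteSpace E]

omit [CompleteSpace E] in
lemma pow_apply_eigen (T : E →L[ℂ] E) (v : E) (μ : ℂ) (h : T v = μ • v) (n : ℕ) :
    (T ^ n) v = μ ^ n • v := by
  induction n with
  | zero => simp
  | succ n ih =>
    rw [pow_succ, ContinuousLinearMap.mul_apply, h, map_smul, ih, smul_smul, pow_succ]
    ring_nf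

lemma exp_apply_eigen (T : E →L[ℂ] E) (v : E) (μ : ℂ) (h : T v = μ • v) :
    NormedSpace.exp T v = Complex.exp μ • v := by
  have hs : Summable fun n : ℕ => ((n.factorial : ℂ)⁻¹ • T ^ n) :=
    NormedSpace.expSeries_summable' (𝕂 := ℂ) T
  have h1 := (ContinuousLinearMap.apply ℂ E v).map_tsum hs
  rw [NormedSpace.exp_eq_tsum ℂ]
  simp only [ContinuousLinearMap.apply_apply] at h1
  rw [h1]
  have h2 : ∀ n : ℕ, ((n.factorial : ℂ)⁻¹ • T ^ n) v = ((n.factorial : ℂ)⁻¹ • μ ^ n) • v := by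
    intro n
    rw [ContinuousLinearMap.smul_apply, pow_apply_eigen T v μ h n, smul_smul, smul_eq_mul]
  simp_rw [h2]
  rw [Summable.tsum_smul_const (NormedSpace.expSeries_summable' (𝕂 := ℂ) μ)]
  rw [Complex.exp_eq_exp_ℂ, NormedSpace.exp_eq_tsum ℂ]

lemma exp_pow_apply_eigen (T : E →L[ℂ] E) (v : E) (μ : ℂ) (h : T v = μ • v) (j : ℕ) :
    ((NormedSpace.exp T) ^ j) v = (Complex.exp μ) ^ j • v :=
  pow_apply_eigen _ v _ (exp_apply_eigen T v μ h) j

end aux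

lemma geom_bound (θ : ℝ) (hθ0 : θ ≠ 0) (hθ : |θ| ≤ Real.pi) (Δ : ℕ) :
    ‖∑ j ∈ Finset.range Δ, Complex.exp ((θ : ℂ) * Complex.I) ^ j‖
      ≤ Real.pi / |θ| := by
  have hπ : (0:ℝ) < Real.pi := Real.pi_pos
  set z : ℂ := Complex.exp ((θ : ℂ) * Complex.I) with hz
  have hzabs : ‖z‖ = 1 := Complex.norm_exp_ofReal_mul_I θ
  have hz1 : z ≠ 1 := by
    intro h
    rw [hz, Complex.exp_eq_one_iff] at h
    obtain ⟨n, hn⟩ := h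
    have h2 : (θ : ℂ) = (n : ℂ) * (2 * (Real.pi : ℂ)) := by
      apply mul_right_cancel₀ Complex.I_ne_zero
      rw [hn]; ring
    have hθeq : θ = (n : ℝ) * (2 * Real.pi) := by exact_mod_cast h2
    have hn0 : n ≠ 0 := by
      rintro rfl; simp at hθeq; exact hθ0 hθeq
    have h1n : (1:ℝ) ≤ |(n:ℝ)| := by
      exact_mod_cast Int.one_le_abs (by exact_mod_cast hn0)
    rw [hθeq, abs_mul, abs_of_pos (by positivity : (0:ℝ) < 2*Real.pi)] at hθ
    nlinarith
  have hzsub : z - 1 = (Real.cos θ - 1 : ℝ) + (Real.sin θ : ℝ) * Complex.I := by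
    rw [hz, Complex.exp_mul_I, ← Complex.ofReal_cos, ← Complex.ofReal_sin]
    push_cast
    ring
  have habs2 : ‖z - 1‖ ^ 2 = 2 - 2 * Real.cos θ := by
    rw [Complex.sq_norm, hzsub, Complex.normSq_add_mul_I]
    nlinarith [Real.sin_sq_add_cos_sq θ]
  have hcos : Real.cos θ ≤ 1 - 2 / Real.pi ^ 2 * θ ^ 2 :=
    Real.cos_le_one_sub_mul_cos_sq hθ
  have hsq : (2 / Real.pi * |θ|) ^ 2 ≤ ‖z - 1‖ ^ 2 := by
    rw [habs2, mul_pow, sq_abs, div_pow]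
    have h4 : (2:ℝ) ^ 2 / Real.pi ^ 2 * θ ^ 2 = 2 * (2 / Real.pi ^ 2 * θ ^ 2) := by ring
    rw [h4]; linarith
  have hlow : 2 / Real.pi * |θ| ≤ ‖z - 1‖ := by
    have hc : (0:ℝ) ≤ 2 / Real.pi * |θ| := by positivity
    nlinarith [norm_nonneg (z - 1)]
  have hd0 : 0 < ‖z - 1‖ :=
    lt_of_lt_of_le (by positivity : (0:ℝ) < 2 / Real.pi * |θ|) hlow
  rw [geom_sum_eq hz1 Δ, norm_div]
  have hnum : ‖z ^ Δ - 1‖ ≤ 2 := by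
    calc ‖z ^ Δ - 1‖ ≤ ‖z ^ Δ‖ + ‖1‖ :=
          norm_sub_le _ 1
      _ ≤ 2 := by rw [norm_pow, hzabs, one_pow, norm_one]; norm_num
  calc ‖z ^ Δ - 1‖ / ‖z - 1‖
      ≤ 2 / (2 / Real.pi * |θ|) :=
        div_le_div₀ (by norm_num) hnum (by positivity) hlow
    _ = Real.pi / |θ| := by field_simp

lemma norm_sq_sum_orthonormal {ι : Type*} [Fintype ι]
    {E : Type*} [NormedAddCommGroup E] [InnerProductSpace ℂ E]
    (b : OrthonormalBasis ι ℂ E) (a : ι → ℂ) :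
    ‖∑ i, a i • b i‖ ^ 2 = ∑ i, ‖a i‖ ^ 2 := by
  have h := b.orthonormal.inner_sum a a Finset.univ
  have h2 : (‖∑ i, a i • b i‖ : ℝ) ^ 2 = Complex.re ⟪∑ i, a i • b i, ∑ i, a i • b i⟫_ℂ := by
    rw [inner_self_eq_norm_sq_to_K (𝕜 := ℂ)]
    simp [← Complex.ofReal_pow]
  rw [h2, h, Complex.re_sum]
  refine Finset.sum_congr rfl fun i _ => ?_
  have : (starRingEnd ℂ) (a i) * a i = (‖a i‖ ^ 2 : ℝ) := by
    rw [mul_comm, Complex.mul_conj, Complex.normSq_eq_norm_sq]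
  rw [this, Complex.ofReal_re]

set_option maxHeartbeats 2000000 in
/-- **Cancellation in the operator geometric sum.** -/
theorem operator_geometric_sum_cancellation {d : ℕ} (hd : 1 ≤ d)
    (lam ε : ℝ) (hlam : 0 < lam) (hε : 0 < ε)
    (H : Matrix (Fin d) (Fin d) ℂ) (hherm : H.IsHermitian)
    (hgap : ∀ (μ : ℂ) (v : EuclideanSpace ℂ (Fin d)), v ≠ 0 →
      opCLM H v = μ • v → μ ≠ 0 → lam ≤ ‖μ‖)
    (hεH : ε * ‖opCLM H‖ ≤ Real.pi)
    (w : EuclideanSpace ℂ (Fin d))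
    (hw : ∀ v : EuclideanSpace ℂ (Fin d), opCLM H v = 0 → ⟪v, w⟫_ℂ = 0)
    (Δ : ℕ) :
    ‖∑ j ∈ Finset.range Δ,
        (NormedSpace.exp ((Complex.I * (ε : ℂ)) • opCLM H) ^ j) w‖ ≤
      (4 / (ε * lam)) * ‖w‖ := by
  classical
  have hsymT : LinearMap.IsSymmetric
      ((opCLM H : EuclideanSpace ℂ (Fin d) →L[ℂ] EuclideanSpace ℂ (Fin d)) :
        EuclideanSpace ℂ (Fin d) →ₗ[ℂ] EuclideanSpace ℂ (Fin d)) := by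
    rw [opCLM, Matrix.coe_toEuclideanCLM_eq_toEuclideanLin]
    exact Matrix.isHermitian_iff_isSymmetric.mp hherm
  have hn : Module.finrank ℂ (EuclideanSpace ℂ (Fin d)) = d := finrank_euclideanSpace_fin
  set b := hsymT.eigenvectorBasis hn with hb
  set μ := hsymT.eigenvalues hn with hμ
  have heig : ∀ i, opCLM H (b i) = (μ i : ℂ) • b i := fun i => by
    exact hsymT.apply_eigenvectorBasis hn i
  have hbnorm : ∀ i, ‖b i‖ = 1 := fun i => b.orthonormal.1 i
  have hbne : ∀ i, b i ≠ 0 := fun i => by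
    intro h; have := hbnorm i; rw [h, norm_zero] at this; norm_num at this
  -- eigenvalue bounds
  have hμle : ∀ i, |μ i| ≤ ‖opCLM H‖ := fun i => by
    have h1 : ‖opCLM H (b i)‖ ≤ ‖opCLM H‖ * ‖b i‖ := (opCLM H).le_opNorm (b i)
    rw [heig i, norm_smul, hbnorm i, Complex.norm_real, Real.norm_eq_abs] at h1
    linarith
  have hμge : ∀ i, μ i ≠ 0 → lam ≤ |μ i| := fun i hi => by
    have := hgap (μ i : ℂ) (b i) (hbne i) (heig i) (by exact_mod_cast hi)
    simpa [Complex.norm_real] using this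
  -- the operator A and its eigenvectors
  set A := (Complex.I * (ε : ℂ)) • opCLM H with hA
  have heigA : ∀ i, A (b i) = (((ε * μ i : ℝ) : ℂ) * Complex.I) • b i := fun i => by
    rw [hA, ContinuousLinearMap.smul_apply, heig i, smul_smul]
    congr 1
    push_cast; ring
  set z : Fin d → ℂ := fun i => Complex.exp (((ε * μ i : ℝ) : ℂ) * Complex.I) with hzdef
  have hUj : ∀ i j, ((NormedSpace.exp A) ^ j) (b i) = z i ^ j • b i := fun i j =>
    exp_pow_apply_eigen A (b i) _ (heigA i) j
  -- coefficients
  set c : Fin d → ℂ := fun i => b.repr w i with hc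
  have hc0 : ∀ i, μ i = 0 → c i = 0 := fun i hi => by
    rw [hc]
    simp only
    rw [b.repr_apply_apply]
    exact hw (b i) (by rw [heig i, hi]; simp)
  have hwsum : w = ∑ i, c i • b i := (b.sum_repr w).symm
  set g : Fin d → ℂ := fun i => ∑ j ∈ Finset.range Δ, z i ^ j with hg
  -- rewrite the sum
  have hS : (∑ j ∈ Finset.range Δ, ((NormedSpace.exp A) ^ j) w)
      = ∑ i, (g i * c i) • b i := by
    have h1 : ∀ j, ((NormedSpace.exp A) ^ j) w = ∑ i, (z i ^ j * c i) • b i := by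
      intro j
      conv_lhs => rw [hwsum]
      rw [map_sum]
      refine Finset.sum_congr rfl fun i _ => ?_
      rw [map_smul, hUj i j, smul_smul, mul_comm]
    simp_rw [h1]
    rw [Finset.sum_comm]
    refine Finset.sum_congr rfl fun i _ => ?_
    rw [← Finset.sum_smul, ← Finset.sum_mul]
  -- bound for each coefficient
  have hεlam : (0:ℝ) < ε * lam := by positivity
  set K : ℝ := 4 / (ε * lam) with hK
  have hK0 : (0:ℝ) ≤ K := by positivity
  have hcoef : ∀ i, ‖g i * c i‖ ≤ K * ‖c i‖ := by
    intro i
    by_cases hi : μ i = 0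
    · rw [hc0 i hi]; simp
    · have hθ0 : ε * μ i ≠ 0 := by
        intro h; exact hi (by nlinarith [mul_eq_zero.mp h])
      have hθπ : |ε * μ i| ≤ Real.pi := by
        rw [abs_mul, abs_of_pos hε]
        calc ε * |μ i| ≤ ε * ‖opCLM H‖ := by
              have := hμle i; nlinarith
          _ ≤ Real.pi := hεH
      have hgb := geom_bound (ε * μ i) hθ0 hθπ Δ
      have hglam : ‖g i‖ ≤ K := by
        refine le_trans hgb ?_
        rw [hK]
        have h1 : ε * lam ≤ |ε * μ i| := by
          rw [abs_mul, abs_of_pos hε]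
          have := hμge i hi
          nlinarith
        have h2 : Real.pi / |ε * μ i| ≤ Real.pi / (ε * lam) :=
          div_le_div_of_nonneg_left Real.pi_pos.le hεlam h1
        refine le_trans h2 ?_
        have hπ4 : Real.pi ≤ 4 := Real.pi_le_four
        gcongr
      rw [norm_mul]
      exact mul_le_mul_of_nonneg_right hglam (norm_nonneg _)
  -- combine via Pythagoras
  rw [hS]
  clear_value A b μ z c g K
  have hnS : ‖∑ i, (g i * c i) • b i‖ ^ 2 = ∑ i, ‖g i * c i‖ ^ 2 :=
    norm_sq_sum_orthonormal b _
  have hnw : ‖w‖ ^ 2 = ∑ i, ‖c i‖ ^ 2 := by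
    conv_lhs => rw [hwsum]
    exact norm_sq_sum_orthonormal b _
  have hsum : ∑ i, ‖g i * c i‖ ^ 2 ≤ K ^ 2 * ∑ i, ‖c i‖ ^ 2 := by
    rw [Finset.mul_sum]
    refine Finset.sum_le_sum fun i _ => ?_
    have := hcoef i
    nlinarith [norm_nonneg (g i * c i), norm_nonneg (c i)]
  have hfin : ‖∑ i, (g i * c i) • b i‖ ^ 2 ≤ (K * ‖w‖) ^ 2 := by
    rw [hnS, mul_pow, hnw]
    exact hsum
  have hKw : (0:ℝ) ≤ K * ‖w‖ := mul_nonneg hK0 (norm_nonneg w)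
  nlinarith [norm_nonneg (∑ i, (g i * c i) • b i)]
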